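/- (Theorem 1, exactness of probabilistic ABC.) The conditional distribution of θ given acceptance in the rejection scheme (θ ~ π, X | θ ~ f(·|θ), U ~ Uniform[0,1] independent, accept iff U ≤ π_ε(D − X)/c) is equal to the conditional distribution of θ̂ given D' = D in the additive-error model θ̂ ~ π, X | θ̂ ~ f(·|θ̂), ε ~ π_ε independent, D' := X + ε; both have density θ ↦ π(θ) ∫ π_ε(D − x) f(x|θ) dx / ∫ π(θ') ∫ π_ε(D − x) f(x|θ') dx dθ', provided this normalising integral is positive and finite. -/

import Mathlib

open MeasureTheory ProbabilityTheory

private lemma swap3 {α β γ : Type*} [MeasurableSpace α] [MeasurableSpace β] [MeasurableSpace γ]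
    (μ : Measure α) (ν : Measure β) (ρ : Measure γ) [SFinite μ] [SFinite ν] [SFinite ρ]
    (F : α → β → γ → ENNReal) (hF : Measurable fun r : (α × β) × γ => F r.1.1 r.1.2 r.2) :
    ∫⁻ a, ∫⁻ b, ∫⁻ c, F a b c ∂ρ ∂ν ∂μ = ∫⁻ c, ∫⁻ a, ∫⁻ b, F a b c ∂ν ∂μ ∂ρ := by
  have step1 : ∀ a, (∫⁻ b, ∫⁻ c, F a b c ∂ρ ∂ν) = ∫⁻ c, ∫⁻ b, F a b c ∂ν ∂ρ := by
    intro a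
    exact lintegral_lintegral_swap
      ((hF.comp ((measurable_const.prodMk measurable_fst).prodMk measurable_snd)).aemeasurable)
  rw [lintegral_congr step1]
  exact lintegral_lintegral_swap
    ((Measurable.lintegral_prod_right'
      (hF.comp (((measurable_fst.fst).prodMk measurable_snd).prodMk measurable_fst.snd))).aemeasurable)

/-- **Theorem 1 of the paper.** The conditional distribution of θ given acceptance
in the rejection scheme (θ ~ π, X | θ ~ f(·|θ), U ~ Uniform[0,1] independent, accept iff
U ≤ π_ε(D − X)/c) equals the conditional distribution of θ̂ given D' = D in the additive-error
model (θ̂ ~ π, X | θ̂ ~ f(·|θ̂), ε ~ π_ε independent, D' := X + ε): both have density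
θ ↦ π(θ) ∫ π_ε(D − x) f(x|θ) dx / Z with Z = ∫ π(θ') ∫ π_ε(D − x) f(x|θ') dx dθ', assumed
positive and finite.  The first conjunct identifies the accepted-θ distribution; the second
disintegrates the law of (θ̂, D') over D', exhibiting θ ↦ π(θ) ∫ π_ε(d − x) f(x|θ) dx / Z(d)
as the conditional density of θ̂ given D' = d (in particular at d = D it is the same density). -/
theorem abc_exact_under_model_error (p d : ℕ)
    (π : (Fin p → ℝ) → ℝ) (f : (Fin p → ℝ) → (Fin d → ℝ) → ℝ)
    (πε : (Fin d → ℝ) → ℝ) (D : Fin d → ℝ) (c : ℝ)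
    (hπ_meas : Measurable π) (hπ_nonneg : ∀ θ, 0 ≤ π θ) (hπ_int : ∫ θ, π θ = 1)
    (hf_meas : Measurable (Function.uncurry f)) (hf_nonneg : ∀ θ x, 0 ≤ f θ x)
    (hf_int : ∀ θ, ∫ x, f θ x = 1)
    (hε_meas : Measurable πε) (hε_nonneg : ∀ r, 0 ≤ πε r) (hε_int : ∫ r, πε r = 1)
    (hc : 0 < c) (hεc : ∀ r, πε r ≤ c)
    (hZ_pos : 0 < ∫ θ, π θ * ∫ x, πε (D - x) * f θ x)
    (hZ_fin : Integrable (fun θ => π θ * ∫ x, πε (D - x) * f θ x)) :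
    (Measure.map (fun ω : ((Fin p → ℝ) × (Fin d → ℝ)) × ℝ => ω.1.1)
      (ProbabilityTheory.cond
        ((((volume : Measure ((Fin p → ℝ) × (Fin d → ℝ))).withDensity
            (fun q => ENNReal.ofReal (π q.1 * f q.1 q.2))).prod
          ((volume : Measure ℝ).restrict (Set.Icc 0 1))))
        {ω : ((Fin p → ℝ) × (Fin d → ℝ)) × ℝ | ω.2 ≤ πε (D - ω.1.2) / c})
    = (volume : Measure (Fin p → ℝ)).withDensity
        (fun θ => ENNReal.ofReal (π θ * (∫ x, πε (D - x) * f θ x) /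
          (∫ θ', π θ' * ∫ x, πε (D - x) * f θ' x))))
    ∧
    (∀ B : Set (Fin p → ℝ), ∀ C : Set (Fin d → ℝ), MeasurableSet B → MeasurableSet C →
      Measure.map (fun ω : (Fin p → ℝ) × (Fin d → ℝ) × (Fin d → ℝ) => (ω.1, ω.2.1 + ω.2.2))
        ((volume : Measure ((Fin p → ℝ) × (Fin d → ℝ) × (Fin d → ℝ))).withDensity
          (fun ω => ENNReal.ofReal (π ω.1 * f ω.1 ω.2.1 * πε ω.2.2)))
        (B ×ˢ C)
      = ENNReal.ofReal (∫ dd in C,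
          (∫ θ', π θ' * ∫ x, πε (dd - x) * f θ' x) *
            ∫ θ in B, π θ * (∫ x, πε (dd - x) * f θ x) /
              (∫ θ', π θ' * ∫ x, πε (dd - x) * f θ' x))) := by
  have hπ_integrable : Integrable π := by
    by_contra h; rw [integral_undef h] at hπ_int; norm_num at hπ_int
  have hfθ_meas : ∀ θ, Measurable (f θ) := fun θ =>
    hf_meas.comp (measurable_prodMk_left)
  have hf_integrable : ∀ θ, Integrable (f θ) := by
    intro θ; by_contra h
    have := hf_int θ; rw [integral_undef h] at this; norm_num at this
  have hε_integrable : Integrable πε := by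
    by_contra h; rw [integral_undef h] at hε_int; norm_num at hε_int
  -- measurability of (θ, dd) ↦ πε (dd - x) * f θ x jointly together with x
  have hker_meas : Measurable
      (fun r : ((Fin p → ℝ) × (Fin d → ℝ)) × (Fin d → ℝ) => πε (r.1.2 - r.2) * f r.1.1 r.2) :=
    (hε_meas.comp (measurable_fst.snd.sub measurable_snd)).mul
      (hf_meas.comp (measurable_fst.fst.prodMk measurable_snd))
  -- I θ dd := ∫ x, πε (dd - x) * f θ x
  have hI_meas : Measurable (fun q : (Fin p → ℝ) × (Fin d → ℝ) => ∫ x, πε (q.2 - x) * f q.1 x) :=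
    hker_meas.stronglyMeasurable.integral_prod_right'.measurable
  have hI_int : ∀ (θ : Fin p → ℝ) (dd : Fin d → ℝ),
      Integrable (fun x => πε (dd - x) * f θ x) := by
    intro θ dd
    refine Integrable.mono ((hf_integrable θ).const_mul c)
      (((hε_meas.comp (measurable_const.sub measurable_id)).mul (hfθ_meas θ)).aestronglyMeasurable)
      (Filter.Eventually.of_forall fun x => ?_)
    rw [Real.norm_eq_abs, Real.norm_eq_abs,
      abs_of_nonneg (mul_nonneg (hε_nonneg _) (hf_nonneg _ _)),
      abs_of_nonneg (mul_nonneg hc.le (hf_nonneg _ _))]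
    exact mul_le_mul_of_nonneg_right (hεc _) (hf_nonneg _ _)
  have hI_nonneg : ∀ (θ : Fin p → ℝ) (dd : Fin d → ℝ), 0 ≤ ∫ x, πε (dd - x) * f θ x :=
    fun θ dd => integral_nonneg fun x => mul_nonneg (hε_nonneg _) (hf_nonneg _ _)
  have hI_le : ∀ (θ : Fin p → ℝ) (dd : Fin d → ℝ), (∫ x, πε (dd - x) * f θ x) ≤ c := by
    intro θ dd
    calc (∫ x, πε (dd - x) * f θ x) ≤ ∫ x, c * f θ x :=
          integral_mono (hI_int θ dd) ((hf_integrable θ).const_mul c)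
            (fun x => mul_le_mul_of_nonneg_right (hεc _) (hf_nonneg _ _))
      _ = c := by rw [integral_const_mul, hf_int, mul_one]
  have hπI_int : ∀ dd : Fin d → ℝ,
      Integrable (fun θ => π θ * ∫ x, πε (dd - x) * f θ x) := by
    intro dd
    refine Integrable.mono (hπ_integrable.mul_const c)
      ((hπ_meas.mul (hI_meas.comp (measurable_id.prodMk measurable_const))).aestronglyMeasurable)
      (Filter.Eventually.of_forall fun θ => ?_)
    rw [Real.norm_eq_abs, Real.norm_eq_abs,
      abs_of_nonneg (mul_nonneg (hπ_nonneg _) (hI_nonneg _ _)),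
      abs_of_nonneg (mul_nonneg (hπ_nonneg _) hc.le)]
    exact mul_le_mul_of_nonneg_left (hI_le _ _) (hπ_nonneg _)
  have hπI_nonneg : ∀ dd, (0:ℝ) ≤ ∫ θ, π θ * ∫ x, πε (dd - x) * f θ x :=
    fun dd => integral_nonneg fun θ => mul_nonneg (hπ_nonneg _) (hI_nonneg _ _)
  have hZ_meas : Measurable (fun dd => ∫ θ, π θ * ∫ x, πε (dd - x) * f θ x) := by
    have : Measurable (fun q : (Fin d → ℝ) × (Fin p → ℝ) =>
        π q.2 * ∫ x, πε (q.1 - x) * f q.2 x) :=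
      (hπ_meas.comp measurable_snd).mul
        (hI_meas.comp (measurable_snd.prodMk measurable_fst))
    exact this.stronglyMeasurable.integral_prod_right'.measurable
  -- measurability of the acceptance set
  have hA : MeasurableSet {ω : ((Fin p → ℝ) × (Fin d → ℝ)) × ℝ | ω.2 ≤ πε (D - ω.1.2) / c} :=
    measurableSet_le measurable_snd
      ((hε_meas.comp (measurable_const.sub measurable_fst.snd)).div_const c)
  have hw_meas : Measurable (fun q : (Fin p → ℝ) × (Fin d → ℝ) =>
      ENNReal.ofReal (π q.1 * f q.1 q.2)) :=
    ((hπ_meas.comp measurable_fst).mul hf_meas).ennreal_ofReal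
  have hg01 : ∀ q : (Fin p → ℝ) × (Fin d → ℝ),
      0 ≤ πε (D - q.2) / c ∧ πε (D - q.2) / c ≤ 1 := fun q =>
    ⟨div_nonneg (hε_nonneg _) hc.le, (div_le_one hc).2 (hεc _)⟩
  have key1 : ∀ B : Set (Fin p → ℝ), MeasurableSet B →
      (((volume : Measure ((Fin p → ℝ) × (Fin d → ℝ))).withDensity
          (fun q => ENNReal.ofReal (π q.1 * f q.1 q.2))).prod
        ((volume : Measure ℝ).restrict (Set.Icc 0 1)))
        ((fun ω : ((Fin p → ℝ) × (Fin d → ℝ)) × ℝ => ω.1.1) ⁻¹' B ∩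
          {ω : ((Fin p → ℝ) × (Fin d → ℝ)) × ℝ | ω.2 ≤ πε (D - ω.1.2) / c})
      = ENNReal.ofReal ((∫ θ in B, π θ * ∫ x, πε (D - x) * f θ x) / c) := by
    intro B hB
    have hS : MeasurableSet
        ((fun ω : ((Fin p → ℝ) × (Fin d → ℝ)) × ℝ => ω.1.1) ⁻¹' B ∩
          {ω : ((Fin p → ℝ) × (Fin d → ℝ)) × ℝ | ω.2 ≤ πε (D - ω.1.2) / c}) :=
      (measurable_fst.fst hB).inter hA
    rw [Measure.prod_apply hS]
    have hptwise : ∀ q : (Fin p → ℝ) × (Fin d → ℝ),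
        (volume : Measure ℝ).restrict (Set.Icc 0 1)
          (Prod.mk q ⁻¹' ((fun ω : ((Fin p → ℝ) × (Fin d → ℝ)) × ℝ => ω.1.1) ⁻¹' B ∩
            {ω : ((Fin p → ℝ) × (Fin d → ℝ)) × ℝ | ω.2 ≤ πε (D - ω.1.2) / c}))
        = Set.indicator (Prod.fst ⁻¹' B)
            (fun q : (Fin p → ℝ) × (Fin d → ℝ) => ENNReal.ofReal (πε (D - q.2) / c)) q := by
      intro q
      by_cases hq : q.1 ∈ B
      · have hset : Prod.mk q ⁻¹' ((fun ω : ((Fin p → ℝ) × (Fin d → ℝ)) × ℝ => ω.1.1) ⁻¹' B ∩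
            {ω : ((Fin p → ℝ) × (Fin d → ℝ)) × ℝ | ω.2 ≤ πε (D - ω.1.2) / c})
            = Set.Iic (πε (D - q.2) / c) := by
          ext u; simp [hq]
        rw [hset, Set.indicator_of_mem (show q ∈ Prod.fst ⁻¹' B from hq), Measure.restrict_apply measurableSet_Iic]
        have hinter : Set.Iic (πε (D - q.2) / c) ∩ Set.Icc 0 1
            = Set.Icc 0 (πε (D - q.2) / c) := by
          ext u
          simp only [Set.mem_inter_iff, Set.mem_Iic, Set.mem_Icc]
          constructor
          · rintro ⟨h1, h2, h3⟩; exact ⟨h2, h1⟩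
          · rintro ⟨h1, h2⟩; exact ⟨h2, h1, h2.trans (hg01 q).2⟩
        rw [hinter, Real.volume_Icc, sub_zero]
      · have hset : Prod.mk q ⁻¹' ((fun ω : ((Fin p → ℝ) × (Fin d → ℝ)) × ℝ => ω.1.1) ⁻¹' B ∩
            {ω : ((Fin p → ℝ) × (Fin d → ℝ)) × ℝ | ω.2 ≤ πε (D - ω.1.2) / c}) = ∅ := by
          ext u; simp [hq]
        rw [hset, Set.indicator_of_notMem (show q ∉ Prod.fst ⁻¹' B from hq)]; simp
    have hgm2 : Measurable fun q : (Fin p → ℝ) × (Fin d → ℝ) =>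
        ENNReal.ofReal (πε (D - q.2) / c) := by
      exact ((hε_meas.comp (measurable_const.sub measurable_snd)).div_const c).ennreal_ofReal
    rw [lintegral_congr hptwise,
      lintegral_indicator (measurable_fst hB) _,
      restrict_withDensity (measurable_fst hB),
      lintegral_withDensity_eq_lintegral_mul _ hw_meas hgm2]
    rw [← Set.prod_univ, Measure.volume_eq_prod, ← Measure.prod_restrict,
      Measure.restrict_univ]
    simp only [Pi.mul_apply]
    rw [lintegral_prod (fun z : (Fin p → ℝ) × (Fin d → ℝ) => ENNReal.ofReal (π z.1 * f z.1 z.2) * ENNReal.ofReal (πε (D - z.2) / c)) ((hw_meas.mul hgm2).aemeasurable)]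
    have hinner : ∀ θ : Fin p → ℝ,
        (∫⁻ x, (fun q : (Fin p → ℝ) × (Fin d → ℝ) => ENNReal.ofReal (π q.1 * f q.1 q.2)
            * ENNReal.ofReal (πε (D - q.2) / c)) (θ, x))
        = ENNReal.ofReal (π θ * (∫ x, πε (D - x) * f θ x) / c) := by
      intro θ
      have h1 : ∀ x, ENNReal.ofReal (π θ * f θ x) * ENNReal.ofReal (πε (D - x) / c)
          = ENNReal.ofReal (π θ) * ENNReal.ofReal (πε (D - x) * f θ x / c) := by
        intro x
        rw [← ENNReal.ofReal_mul (mul_nonneg (hπ_nonneg θ) (hf_nonneg θ x)),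
          ← ENNReal.ofReal_mul (hπ_nonneg θ)]
        congr 1; ring
      simp only [h1]
      have hm3 : Measurable fun x : Fin d → ℝ => ENNReal.ofReal (πε (D - x) * f θ x / c) := by
        exact (((hε_meas.comp (measurable_const.sub measurable_id)).mul
          (hfθ_meas θ)).div_const c).ennreal_ofReal
      rw [lintegral_const_mul _ hm3]
      rw [← ofReal_integral_eq_lintegral_ofReal ((hI_int θ D).div_const c)
        (Filter.Eventually.of_forall fun x =>
          div_nonneg (mul_nonneg (hε_nonneg _) (hf_nonneg _ _)) hc.le)]
      rw [integral_div, ← ENNReal.ofReal_mul (hπ_nonneg θ), mul_div_assoc]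
    rw [lintegral_congr hinner]
    rw [← ofReal_integral_eq_lintegral_ofReal (((hπI_int D).div_const c).restrict)
      (Filter.Eventually.of_forall fun θ =>
        div_nonneg (mul_nonneg (hπ_nonneg _) (hI_nonneg _ _)) hc.le)]
    rw [integral_div]
  have conj1 : (Measure.map (fun ω : ((Fin p → ℝ) × (Fin d → ℝ)) × ℝ => ω.1.1)
      (ProbabilityTheory.cond
        ((((volume : Measure ((Fin p → ℝ) × (Fin d → ℝ))).withDensity
            (fun q => ENNReal.ofReal (π q.1 * f q.1 q.2))).prod
          ((volume : Measure ℝ).restrict (Set.Icc 0 1))))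
        {ω : ((Fin p → ℝ) × (Fin d → ℝ)) × ℝ | ω.2 ≤ πε (D - ω.1.2) / c})
    = (volume : Measure (Fin p → ℝ)).withDensity
        (fun θ => ENNReal.ofReal (π θ * (∫ x, πε (D - x) * f θ x) /
          (∫ θ', π θ' * ∫ x, πε (D - x) * f θ' x)))) := by
    refine Measure.ext fun B hB => ?_
    rw [Measure.map_apply measurable_fst.fst hB, cond_apply hA, Set.inter_comm, key1 B hB]
    have hμA := key1 Set.univ MeasurableSet.univ
    rw [Set.preimage_univ, Set.univ_inter, setIntegral_univ] at hμA
    rw [hμA, withDensity_apply _ hB]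
    rw [← ofReal_integral_eq_lintegral_ofReal
      (((hπI_int D).div_const (∫ θ', π θ' * ∫ x, πε (D - x) * f θ' x)).restrict)
      (Filter.Eventually.of_forall fun θ =>
        div_nonneg (mul_nonneg (hπ_nonneg _) (hI_nonneg _ _)) (hπI_nonneg D))]
    rw [integral_div]
    rw [← ENNReal.ofReal_inv_of_pos (div_pos hZ_pos hc),
      ← ENNReal.ofReal_mul (inv_nonneg.2 (div_nonneg (hπI_nonneg D) hc.le))]
    congr 1
    field_simp
  -- canonical triple integrand
  have hF_meas : Measurable fun r : ((Fin p → ℝ) × (Fin d → ℝ)) × (Fin d → ℝ) =>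
      ENNReal.ofReal (π r.1.1) * ENNReal.ofReal (πε (r.2 - r.1.2) * f r.1.1 r.1.2) :=
    ((hπ_meas.comp measurable_fst.fst).ennreal_ofReal).mul
      (((hε_meas.comp (measurable_snd.sub measurable_fst.snd)).mul
        (hf_meas.comp (measurable_fst.fst.prodMk measurable_fst.snd))).ennreal_ofReal)
  have hofReal_split : ∀ (θ : Fin p → ℝ) (x dd : Fin d → ℝ),
      ENNReal.ofReal (π θ) * ENNReal.ofReal (πε (dd - x) * f θ x)
      = (ENNReal.ofReal (π θ) * ENNReal.ofReal (f θ x)) * ENNReal.ofReal (πε (dd - x)) := by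
    intro θ x dd
    rw [ENNReal.ofReal_mul (hε_nonneg _)]; ring
  have hπε_lint : ∀ x : Fin d → ℝ,
      ∫⁻ dd, ENNReal.ofReal (πε (dd - x)) = 1 := by
    intro x
    rw [lintegral_sub_right_eq_self (fun dd => ENNReal.ofReal (πε dd)) x,
      ← ofReal_integral_eq_lintegral_ofReal hε_integrable
        (Filter.Eventually.of_forall hε_nonneg), hε_int, ENNReal.ofReal_one]
  have hf_lint : ∀ θ, ∫⁻ x, ENNReal.ofReal (f θ x) = 1 := by
    intro θ
    rw [← ofReal_integral_eq_lintegral_ofReal (hf_integrable θ)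
      (Filter.Eventually.of_forall (hf_nonneg θ)), hf_int, ENNReal.ofReal_one]
  have hπ_lint : ∫⁻ θ, ENNReal.ofReal (π θ) = 1 := by
    rw [← ofReal_integral_eq_lintegral_ofReal hπ_integrable
      (Filter.Eventually.of_forall hπ_nonneg), hπ_int, ENNReal.ofReal_one]
  have hTotal : (∫⁻ θ, ∫⁻ x, ∫⁻ dd,
      ENNReal.ofReal (π θ) * ENNReal.ofReal (πε (dd - x) * f θ x)) = 1 := by
    have h1 : ∀ (θ : Fin p → ℝ) (x : Fin d → ℝ),
        (∫⁻ dd, ENNReal.ofReal (π θ) * ENNReal.ofReal (πε (dd - x) * f θ x))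
        = ENNReal.ofReal (π θ) * ENNReal.ofReal (f θ x) := by
      intro θ x
      simp_rw [hofReal_split θ x]
      have hm : Measurable fun dd : Fin d → ℝ => ENNReal.ofReal (πε (dd - x)) := by
        exact (hε_meas.comp (measurable_id.sub measurable_const)).ennreal_ofReal
      rw [lintegral_const_mul _ hm, hπε_lint x, mul_one]
    calc (∫⁻ θ, ∫⁻ x, ∫⁻ dd, ENNReal.ofReal (π θ) * ENNReal.ofReal (πε (dd - x) * f θ x))
        = ∫⁻ θ, ∫⁻ x, ENNReal.ofReal (π θ) * ENNReal.ofReal (f θ x) := by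
          exact lintegral_congr fun θ => lintegral_congr fun x => h1 θ x
      _ = ∫⁻ θ, ENNReal.ofReal (π θ) * ∫⁻ x, ENNReal.ofReal (f θ x) := by
          exact lintegral_congr fun θ => lintegral_const_mul _ ((hfθ_meas θ).ennreal_ofReal)
      _ = 1 := by simp_rw [hf_lint, mul_one]; exact hπ_lint
  have conj2 : ∀ B : Set (Fin p → ℝ), ∀ C : Set (Fin d → ℝ),
      MeasurableSet B → MeasurableSet C →
      Measure.map (fun ω : (Fin p → ℝ) × (Fin d → ℝ) × (Fin d → ℝ) => (ω.1, ω.2.1 + ω.2.2))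
        ((volume : Measure ((Fin p → ℝ) × (Fin d → ℝ) × (Fin d → ℝ))).withDensity
          (fun ω => ENNReal.ofReal (π ω.1 * f ω.1 ω.2.1 * πε ω.2.2)))
        (B ×ˢ C)
      = ENNReal.ofReal (∫ dd in C,
          (∫ θ', π θ' * ∫ x, πε (dd - x) * f θ' x) *
            ∫ θ in B, π θ * (∫ x, πε (dd - x) * f θ x) /
              (∫ θ', π θ' * ∫ x, πε (dd - x) * f θ' x)) := by
    intro B C hB hC
    have hT : Measurable (fun ω : (Fin p → ℝ) × (Fin d → ℝ) × (Fin d → ℝ) =>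
        (ω.1, ω.2.1 + ω.2.2)) := measurable_fst.prodMk (measurable_snd.fst.add measurable_snd.snd)
    have hset : MeasurableSet ((fun ω : (Fin p → ℝ) × (Fin d → ℝ) × (Fin d → ℝ) =>
        (ω.1, ω.2.1 + ω.2.2)) ⁻¹' (B ×ˢ C)) := hT (hB.prod hC)
    -- the LHS as a triple lintegral over restricted measures
    have hLHS : Measure.map (fun ω : (Fin p → ℝ) × (Fin d → ℝ) × (Fin d → ℝ) =>
          (ω.1, ω.2.1 + ω.2.2))
        ((volume : Measure ((Fin p → ℝ) × (Fin d → ℝ) × (Fin d → ℝ))).withDensity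
          (fun ω => ENNReal.ofReal (π ω.1 * f ω.1 ω.2.1 * πε ω.2.2))) (B ×ˢ C)
        = ∫⁻ θ in B, ∫⁻ x, ∫⁻ dd in C,
            ENNReal.ofReal (π θ) * ENNReal.ofReal (πε (dd - x) * f θ x) := by
      rw [Measure.map_apply hT (hB.prod hC), withDensity_apply _ hset]
      have hG : ∀ ω : (Fin p → ℝ) × (Fin d → ℝ) × (Fin d → ℝ),
          ((fun ω : (Fin p → ℝ) × (Fin d → ℝ) × (Fin d → ℝ) =>
            (ω.1, ω.2.1 + ω.2.2)) ⁻¹' (B ×ˢ C)).indicator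
            (fun ω => ENNReal.ofReal (π ω.1 * f ω.1 ω.2.1 * πε ω.2.2)) ω
          = B.indicator (fun _ => (1:ENNReal)) ω.1 *
              (C.indicator (fun _ => (1:ENNReal)) (ω.2.1 + ω.2.2) *
                ((ENNReal.ofReal (π ω.1) * ENNReal.ofReal (f ω.1 ω.2.1)) *
                  ENNReal.ofReal (πε ω.2.2))) := by
        intro ω
        by_cases h1 : ω.1 ∈ B <;> by_cases h2 : ω.2.1 + ω.2.2 ∈ C <;>
          simp [Set.indicator_apply, Set.mem_preimage, Set.mem_prod, h1, h2,
            ENNReal.ofReal_mul, mul_nonneg, hπ_nonneg, hf_nonneg, mul_assoc]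
      rw [← lintegral_indicator hset, lintegral_congr hG]
      rw [Measure.volume_eq_prod]
      have hm1 : Measurable fun ω : (Fin p → ℝ) × (Fin d → ℝ) × (Fin d → ℝ) =>
          B.indicator (fun _ => (1:ENNReal)) ω.1 *
            (C.indicator (fun _ => (1:ENNReal)) (ω.2.1 + ω.2.2) *
              ((ENNReal.ofReal (π ω.1) * ENNReal.ofReal (f ω.1 ω.2.1)) *
                ENNReal.ofReal (πε ω.2.2))) :=
        ((measurable_one.indicator hB).comp measurable_fst).mul
          (((measurable_one.indicator hC).comp (measurable_snd.fst.add measurable_snd.snd)).mul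
            ((((hπ_meas.comp measurable_fst).ennreal_ofReal).mul
              ((hf_meas.comp (measurable_fst.prodMk measurable_snd.fst)).ennreal_ofReal)).mul
              ((hε_meas.comp measurable_snd.snd).ennreal_ofReal)))
      rw [lintegral_prod _ hm1.aemeasurable]
      -- now the inner space (Fin d → ℝ) × (Fin d → ℝ)
      have hstep : ∀ θ : Fin p → ℝ,
          (∫⁻ q : (Fin d → ℝ) × (Fin d → ℝ),
            B.indicator (fun _ => (1:ENNReal)) θ *
              (C.indicator (fun _ => (1:ENNReal)) (q.1 + q.2) *
                ((ENNReal.ofReal (π θ) * ENNReal.ofReal (f θ q.1)) *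
                  ENNReal.ofReal (πε q.2))))
          = B.indicator (fun _ => (1:ENNReal)) θ *
              ∫⁻ x, ∫⁻ dd in C,
                ENNReal.ofReal (π θ) * ENNReal.ofReal (πε (dd - x) * f θ x) := by
        intro θ
        have hm2 : Measurable fun q : (Fin d → ℝ) × (Fin d → ℝ) =>
            C.indicator (fun _ => (1:ENNReal)) (q.1 + q.2) *
              ((ENNReal.ofReal (π θ) * ENNReal.ofReal (f θ q.1)) * ENNReal.ofReal (πε q.2)) := by
          exact ((measurable_one.indicator hC).comp (measurable_fst.add measurable_snd)).mul
            ((measurable_const.mul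
              ((hfθ_meas θ).comp measurable_fst).ennreal_ofReal).mul
              ((hε_meas.comp measurable_snd).ennreal_ofReal))
        rw [lintegral_const_mul _ hm2]
        congr 1
        rw [Measure.volume_eq_prod, lintegral_prod _ hm2.aemeasurable]
        refine lintegral_congr fun x => ?_
        -- inner integral over the noise e
        have he : ∀ e : Fin d → ℝ,
            C.indicator (fun _ => (1:ENNReal)) (x + e) *
              ((ENNReal.ofReal (π θ) * ENNReal.ofReal (f θ x)) * ENNReal.ofReal (πε e))
            = (ENNReal.ofReal (π θ) * ENNReal.ofReal (f θ x)) *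
                (C.indicator (fun _ => (1:ENNReal)) (x + e) * ENNReal.ofReal (πε e)) := by
          intro e; ring
        simp_rw [he]
        have hm3 : Measurable fun e : Fin d → ℝ =>
            C.indicator (fun _ => (1:ENNReal)) (x + e) * ENNReal.ofReal (πε e) := by
          exact ((measurable_one.indicator hC).comp
            (measurable_const.add measurable_id)).mul (hε_meas.ennreal_ofReal)
        rw [lintegral_const_mul _ hm3]
        have htrans : (∫⁻ e, C.indicator (fun _ => (1:ENNReal)) (x + e) * ENNReal.ofReal (πε e))
            = ∫⁻ dd in C, ENNReal.ofReal (πε (dd - x)) := by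
          have hg : ∀ e : Fin d → ℝ,
              C.indicator (fun _ => (1:ENNReal)) (x + e) * ENNReal.ofReal (πε e)
              = (fun dd => C.indicator
                  (fun dd' => ENNReal.ofReal (πε (dd' - x))) dd) (x + e) := by
            intro e
            by_cases h2 : x + e ∈ C
            · simp [Set.indicator_of_mem h2, add_sub_cancel_left]
            · simp [Set.indicator_of_notMem h2]
          simp_rw [hg]
          rw [lintegral_add_left_eq_self
            (fun dd => C.indicator (fun dd' => ENNReal.ofReal (πε (dd' - x))) dd) x]
          rw [lintegral_indicator hC]
        rw [htrans]
        have hm4 : Measurable fun dd : Fin d → ℝ => ENNReal.ofReal (πε (dd - x)) := by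
          exact (hε_meas.comp (measurable_id.sub measurable_const)).ennreal_ofReal
        rw [← lintegral_const_mul _ hm4]
        refine lintegral_congr fun dd => ?_
        rw [ENNReal.ofReal_mul (hε_nonneg _)]; ring
      rw [lintegral_congr hstep]
      have hindB : ∀ θ : Fin p → ℝ,
          B.indicator (fun _ => (1:ENNReal)) θ *
            (∫⁻ x, ∫⁻ dd in C, ENNReal.ofReal (π θ) * ENNReal.ofReal (πε (dd - x) * f θ x))
          = B.indicator (fun θ' => ∫⁻ x, ∫⁻ dd in C,
              ENNReal.ofReal (π θ') * ENNReal.ofReal (πε (dd - x) * f θ' x)) θ := by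
        intro θ
        by_cases h1 : θ ∈ B
        · simp [Set.indicator_of_mem h1]
        · simp [Set.indicator_of_notMem h1]
      rw [lintegral_congr hindB, lintegral_indicator hB]
    rw [hLHS]
    -- swap the integrals
    have hswap := swap3 ((volume : Measure (Fin p → ℝ)).restrict B)
      (volume : Measure (Fin d → ℝ)) ((volume : Measure (Fin d → ℝ)).restrict C)
      (fun θ x dd => ENNReal.ofReal (π θ) * ENNReal.ofReal (πε (dd - x) * f θ x)) hF_meas
    rw [hswap]
    -- identify the RHS
    have hR1 : ∀ dd : Fin d → ℝ,
        (∫ θ', π θ' * ∫ x, πε (dd - x) * f θ' x) *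
          (∫ θ in B, π θ * (∫ x, πε (dd - x) * f θ x) /
            (∫ θ', π θ' * ∫ x, πε (dd - x) * f θ' x))
        = ∫ θ in B, π θ * ∫ x, πε (dd - x) * f θ x := by
      intro dd
      rcases eq_or_ne (∫ θ', π θ' * ∫ x, πε (dd - x) * f θ' x) 0 with hz | hz
      · rw [hz, zero_mul]
        refine (le_antisymm ?_ ?_).symm
        · calc (∫ θ in B, π θ * ∫ x, πε (dd - x) * f θ x)
              ≤ ∫ θ, π θ * ∫ x, πε (dd - x) * f θ x :=
              setIntegral_le_integral (hπI_int dd)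
                (Filter.Eventually.of_forall fun θ =>
                  mul_nonneg (hπ_nonneg θ) (hI_nonneg θ dd))
            _ = 0 := hz
        · exact setIntegral_nonneg hB fun θ _ => mul_nonneg (hπ_nonneg θ) (hI_nonneg θ dd)
      · rw [integral_div, mul_div_cancel₀ _ hz]
    rw [integral_congr_ae (Filter.Eventually.of_forall fun dd => hR1 dd)]
    -- measurability of dd ↦ ∫ θ in B, π θ * I θ dd
    have hh_meas : Measurable fun dd : Fin d → ℝ =>
        ∫ θ in B, π θ * ∫ x, πε (dd - x) * f θ x := by
      have hZjoint : Measurable (fun q : (Fin d → ℝ) × (Fin p → ℝ) =>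
          π q.2 * ∫ x, πε (q.1 - x) * f q.2 x) :=
        (hπ_meas.comp measurable_snd).mul
          (hI_meas.comp (measurable_snd.prodMk measurable_fst))
      exact hZjoint.stronglyMeasurable.integral_prod_right'.measurable
    -- pointwise identification of ofReal of the inner set-integral
    have hR5 : ∀ dd : Fin d → ℝ,
        ENNReal.ofReal (∫ θ in B, π θ * ∫ x, πε (dd - x) * f θ x)
        = ∫⁻ θ in B, ∫⁻ x,
            ENNReal.ofReal (π θ) * ENNReal.ofReal (πε (dd - x) * f θ x) := by
      intro dd
      rw [ofReal_integral_eq_lintegral_ofReal ((hπI_int dd).restrict)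
        (Filter.Eventually.of_forall fun θ => mul_nonneg (hπ_nonneg θ) (hI_nonneg θ dd))]
      refine lintegral_congr fun θ => ?_
      rw [ENNReal.ofReal_mul (hπ_nonneg θ),
        ofReal_integral_eq_lintegral_ofReal (hI_int θ dd)
          (Filter.Eventually.of_forall fun x => mul_nonneg (hε_nonneg _) (hf_nonneg θ x)),
        ← lintegral_const_mul _ (show Measurable fun x : Fin d → ℝ =>
            ENNReal.ofReal (πε (dd - x) * f θ x) by
          exact ((hε_meas.comp (measurable_const.sub measurable_id)).mul
            (hfθ_meas θ)).ennreal_ofReal)]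
    -- integrability of the outer integrand on C
    have hbound : (∫⁻ dd in C, ∫⁻ θ in B, ∫⁻ x,
        ENNReal.ofReal (π θ) * ENNReal.ofReal (πε (dd - x) * f θ x)) < ⊤ := by
      have hle1 : (∫⁻ dd in C, ∫⁻ θ in B, ∫⁻ x,
          ENNReal.ofReal (π θ) * ENNReal.ofReal (πε (dd - x) * f θ x))
          ≤ ∫⁻ dd, ∫⁻ θ, ∫⁻ x,
            ENNReal.ofReal (π θ) * ENNReal.ofReal (πε (dd - x) * f θ x) := by
        refine le_trans (lintegral_mono fun dd => ?_)
          (lintegral_mono' Measure.restrict_le_self le_rfl)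
        exact lintegral_mono' Measure.restrict_le_self le_rfl
      have hswap2 := swap3 (volume : Measure (Fin p → ℝ))
        (volume : Measure (Fin d → ℝ)) (volume : Measure (Fin d → ℝ))
        (fun θ x dd => ENNReal.ofReal (π θ) * ENNReal.ofReal (πε (dd - x) * f θ x)) hF_meas
      rw [← hswap2, hTotal] at hle1
      exact lt_of_le_of_lt hle1 ENNReal.one_lt_top
    have hh_int : Integrable (fun dd => ∫ θ in B, π θ * ∫ x, πε (dd - x) * f θ x)
        ((volume : Measure (Fin d → ℝ)).restrict C) := by
      refine ⟨hh_meas.aestronglyMeasurable, ?_⟩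
      refine (hasFiniteIntegral_iff_ofReal (Filter.Eventually.of_forall fun dd =>
        setIntegral_nonneg hB fun θ _ => mul_nonneg (hπ_nonneg θ) (hI_nonneg θ dd))).2 ?_
      calc (∫⁻ dd in C, ENNReal.ofReal (∫ θ in B, π θ * ∫ x, πε (dd - x) * f θ x))
          = ∫⁻ dd in C, ∫⁻ θ in B, ∫⁻ x,
              ENNReal.ofReal (π θ) * ENNReal.ofReal (πε (dd - x) * f θ x) :=
            lintegral_congr fun dd => hR5 dd
        _ < ⊤ := hbound
    rw [ofReal_integral_eq_lintegral_ofReal hh_int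
      (Filter.Eventually.of_forall fun dd =>
        setIntegral_nonneg hB fun θ _ => mul_nonneg (hπ_nonneg θ) (hI_nonneg θ dd))]
    exact (lintegral_congr fun dd => hR5 dd).symm
  exact ⟨conj1, conj2⟩
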